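/- Let K be a field, and consider the genus one models C_4 ⊂ P^3 defined by the two quadrics ℓ_1α_1 + ℓ_2α_2 + ℓ_3α_3 = 0 and ℓ_1β_1 + ℓ_2β_2 + ℓ_3β_3 = 0 (with ℓ_i, α_i, β_i linear forms in x_1,...,x_4), and C_5 ⊂ P^4 defined by the 4×4 Pfaffians of the 5×5 alternating matrix Φ with Φ_{12} = x_5, Φ_{13} = α_1, Φ_{14} = α_2, Φ_{15} = α_3, Φ_{23} = β_1, Φ_{24} = β_2, Φ_{25} = β_3, Φ_{34} = ℓ_3, Φ_{35} = -ℓ_2, Φ_{45} = ℓ_1. Then the map ψ(x_1:x_2:x_3:x_4) = (x_1ℓ_i : x_2ℓ_i : x_3ℓ_i : x_4ℓ_i : α_jβ_k - α_kβ_j) (for any cyclic permutation (i,j,k) of (1,2,3)) sends points of C_4 where ℓ_i ≠ 0 to points of C_5, and the projection (x_1:...:x_5) ↦ (x_1:x_2:x_3:x_4) sends points of C_5 back to C_4, with the two maps mutually inverse on the relevant open sets. -/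

import Mathlib

open MvPolynomial

/-- The Pfaffian of a 4×4 alternating matrix. -/
def pf4 {R : Type*} [CommRing R] (M : Matrix (Fin 4) (Fin 4) R) : R :=
  M 0 1 * M 2 3 - M 0 2 * M 1 3 + M 0 3 * M 1 2

/-- The vector of signed 4×4 Pfaffians of a 5×5 alternating matrix. -/
def signedPf {R : Type*} [CommRing R] (M : Matrix (Fin 5) (Fin 5) R) (i : Fin 5) : R :=
  (-1 : R) ^ (i : ℕ) * pf4 (M.submatrix i.succAbove i.succAbove)

section

variable {K : Type*} [Field K] (ℓ α β : Fin 3 → MvPolynomial (Fin 4) K)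

/-- A point of `P³` lies on the quadric intersection
`∑ ℓᵢαᵢ = ∑ ℓᵢβᵢ = 0`. -/
def OnC4 (x : Fin 4 → K) : Prop :=
  (∑ i, eval x (ℓ i) * eval x (α i)) = 0 ∧
  (∑ i, eval x (ℓ i) * eval x (β i)) = 0

/-- The 5×5 alternating matrix `Φ` (with `Φ₁₂ = x₅`, `Φ₁,₂₊ᵢ = αᵢ`,
`Φ₂,₂₊ᵢ = βᵢ`, `Φ₃₄ = ℓ₃`, `Φ₃₅ = -ℓ₂`, `Φ₄₅ = ℓ₁`), evaluated at a point
`y ∈ P⁴`. -/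
noncomputable def modelMatrix (y : Fin 5 → K) : Matrix (Fin 5) (Fin 5) K :=
  let w : Fin 4 → K := fun t => y t.castSucc
  !![0, y 4, eval w (α 0), eval w (α 1), eval w (α 2);
     -(y 4), 0, eval w (β 0), eval w (β 1), eval w (β 2);
     -(eval w (α 0)), -(eval w (β 0)), 0, eval w (ℓ 2), -(eval w (ℓ 1));
     -(eval w (α 1)), -(eval w (β 1)), -(eval w (ℓ 2)), 0, eval w (ℓ 0);
     -(eval w (α 2)), -(eval w (β 2)), eval w (ℓ 1), -(eval w (ℓ 0)), 0]

/-- A point of `P⁴` lies on the Pfaffian locus of the model. -/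
def OnC5 (y : Fin 5 → K) : Prop :=
  ∀ n, signedPf (modelMatrix ℓ α β y) n = 0

/-- The map `ψ : C₄ → C₅` attached to the cyclic permutation `(i,j,k)`. -/
noncomputable def psiMap (i j k : Fin 3) (x : Fin 4 → K) : Fin 5 → K :=
  ![x 0 * eval x (ℓ i), x 1 * eval x (ℓ i), x 2 * eval x (ℓ i),
    x 3 * eval x (ℓ i),
    eval x (α j) * eval x (β k) - eval x (α k) * eval x (β j)]

end

section Aux

variable {K : Type*} [Field K] (ℓ α β : Fin 3 → MvPolynomial (Fin 4) K)

/-- Evaluation of a degree-one homogeneous polynomial is linear under scaling. -/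
lemma eval_mul_smul {σ : Type*} {p : MvPolynomial σ K} (hp : p.IsHomogeneous 1)
    (c : K) (x : σ → K) :
    eval (fun t => c * x t) p = c * eval x p := by
  rw [eval_eq, eval_eq, Finset.mul_sum]
  refine Finset.sum_congr rfl fun d hd => ?_
  have h1 : ∑ t ∈ d.support, d t = 1 := by
    have h := hp (mem_support_iff.mp hd)
    rwa [show (1 : σ → ℕ) = fun _ => 1 from rfl, ← Finsupp.degree_eq_weight_one, Finsupp.degree_apply] at h
  rw [mul_left_comm]
  congr 1
  calc ∏ t ∈ d.support, (c * x t) ^ d t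
      = (∏ t ∈ d.support, c ^ d t) * ∏ t ∈ d.support, x t ^ d t := by
        rw [← Finset.prod_mul_distrib]; simp [mul_pow]
    _ = c * ∏ t ∈ d.support, x t ^ d t := by
        rw [Finset.prod_pow_eq_pow_sum, h1, pow_one]

lemma spf0_eq (y : Fin 5 → K) :
    signedPf (modelMatrix ℓ α β y) 0 =
      eval (fun t => y t.castSucc) (ℓ 0) * eval (fun t => y t.castSucc) (β 0)
      + eval (fun t => y t.castSucc) (ℓ 1) * eval (fun t => y t.castSucc) (β 1)
      + eval (fun t => y t.castSucc) (ℓ 2) * eval (fun t => y t.castSucc) (β 2) := by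
  simp only [signedPf, pf4, Matrix.submatrix_apply,
    show (0:Fin 5).succAbove 0 = 1 from by decide,
    show (0:Fin 5).succAbove 1 = 2 from by decide,
    show (0:Fin 5).succAbove 2 = 3 from by decide,
    show (0:Fin 5).succAbove 3 = 4 from by decide,
    show ((0:Fin 5):ℕ) = 0 from rfl]
  simp [modelMatrix]
  try ring

lemma spf1_eq (y : Fin 5 → K) :
    signedPf (modelMatrix ℓ α β y) 1 =
      -(eval (fun t => y t.castSucc) (ℓ 0) * eval (fun t => y t.castSucc) (α 0)
      + eval (fun t => y t.castSucc) (ℓ 1) * eval (fun t => y t.castSucc) (α 1)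
      + eval (fun t => y t.castSucc) (ℓ 2) * eval (fun t => y t.castSucc) (α 2)) := by
  simp only [signedPf, pf4, Matrix.submatrix_apply,
    show (1:Fin 5).succAbove 0 = 0 from by decide,
    show (1:Fin 5).succAbove 1 = 2 from by decide,
    show (1:Fin 5).succAbove 2 = 3 from by decide,
    show (1:Fin 5).succAbove 3 = 4 from by decide,
    show ((1:Fin 5):ℕ) = 1 from rfl]
  simp [modelMatrix]
  try ring

lemma spf2_eq (y : Fin 5 → K) :
    signedPf (modelMatrix ℓ α β y) 2 =
      y 4 * eval (fun t => y t.castSucc) (ℓ 0)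
      - eval (fun t => y t.castSucc) (α 1) * eval (fun t => y t.castSucc) (β 2)
      + eval (fun t => y t.castSucc) (α 2) * eval (fun t => y t.castSucc) (β 1) := by
  simp only [signedPf, pf4, Matrix.submatrix_apply,
    show (2:Fin 5).succAbove 0 = 0 from by decide,
    show (2:Fin 5).succAbove 1 = 1 from by decide,
    show (2:Fin 5).succAbove 2 = 3 from by decide,
    show (2:Fin 5).succAbove 3 = 4 from by decide,
    show ((2:Fin 5):ℕ) = 2 from rfl]
  simp [modelMatrix]
  try ring

lemma spf3_eq (y : Fin 5 → K) :
    signedPf (modelMatrix ℓ α β y) 3 =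
      y 4 * eval (fun t => y t.castSucc) (ℓ 1)
      + eval (fun t => y t.castSucc) (α 0) * eval (fun t => y t.castSucc) (β 2)
      - eval (fun t => y t.castSucc) (α 2) * eval (fun t => y t.castSucc) (β 0) := by
  simp only [signedPf, pf4, Matrix.submatrix_apply,
    show (3:Fin 5).succAbove 0 = 0 from by decide,
    show (3:Fin 5).succAbove 1 = 1 from by decide,
    show (3:Fin 5).succAbove 2 = 2 from by decide,
    show (3:Fin 5).succAbove 3 = 4 from by decide,
    show ((3:Fin 5):ℕ) = 3 from rfl]
  simp [modelMatrix]
  try ring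

lemma spf4_eq (y : Fin 5 → K) :
    signedPf (modelMatrix ℓ α β y) 4 =
      y 4 * eval (fun t => y t.castSucc) (ℓ 2)
      - eval (fun t => y t.castSucc) (α 0) * eval (fun t => y t.castSucc) (β 1)
      + eval (fun t => y t.castSucc) (α 1) * eval (fun t => y t.castSucc) (β 0) := by
  simp only [signedPf, pf4, Matrix.submatrix_apply,
    show (4:Fin 5).succAbove 0 = 0 from by decide,
    show (4:Fin 5).succAbove 1 = 1 from by decide,
    show (4:Fin 5).succAbove 2 = 2 from by decide,
    show (4:Fin 5).succAbove 3 = 3 from by decide,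
    show ((4:Fin 5):ℕ) = 4 from rfl]
  simp [modelMatrix]
  try ring

end Aux

/-- The maps `ψ` and the projection are mutually inverse morphisms between
the quadric intersection `C₄ ⊂ P³` and the Pfaffian model `C₅ ⊂ P⁴`. -/
theorem quadric_intersection_pfaffian_correspondence {K : Type*} [Field K]
    (ℓ α β : Fin 3 → MvPolynomial (Fin 4) K)
    (hl : ∀ i, (ℓ i).IsHomogeneous 1) (ha : ∀ i, (α i).IsHomogeneous 1)
    (hb : ∀ i, (β i).IsHomogeneous 1)
    (i j k : Fin 3) (hcyc : j = i + 1 ∧ k = j + 1) :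
    -- ψ maps C₄ (where ℓᵢ ≠ 0) into C₅
    (∀ x : Fin 4 → K, OnC4 ℓ α β x → eval x (ℓ i) ≠ 0 →
      OnC5 ℓ α β (psiMap ℓ α β i j k x)) ∧
    -- the projection maps C₅ back into C₄
    (∀ y : Fin 5 → K, OnC5 ℓ α β y →
      OnC4 ℓ α β (fun t => y t.castSucc)) ∧
    -- proj ∘ ψ = ℓᵢ • id
    (∀ x : Fin 4 → K,
      (fun t : Fin 4 => psiMap ℓ α β i j k x t.castSucc) =
        eval x (ℓ i) • x) ∧
    -- ψ ∘ proj is multiplication by a nonzero scalar on C₅ where ℓᵢ ≠ 0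
    (∀ y : Fin 5 → K, OnC5 ℓ α β y → y ≠ 0 →
      eval (fun t : Fin 4 => y t.castSucc) (ℓ i) ≠ 0 →
      ∃ c : K, c ≠ 0 ∧ psiMap ℓ α β i j k (fun t => y t.castSucc) = c • y) := by
  obtain ⟨rfl, rfl⟩ := hcyc
  refine ⟨?_, ?_, ?_, ?_⟩
  · -- ψ maps C₄ into C₅
    intro x hx _hL
    obtain ⟨hA, hB⟩ := hx
    rw [Fin.sum_univ_three] at hA hB
    have hw : (fun t : Fin 4 => psiMap ℓ α β i (i+1) (i+1+1) x t.castSucc) =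
        fun t => eval x (ℓ i) * x t := by
      funext t
      fin_cases t <;>
        simp [psiMap, mul_comm,
          show ((0:Fin 4).castSucc) = (0:Fin 5) from by decide,
          show ((1:Fin 4).castSucc) = (1:Fin 5) from by decide,
          show ((2:Fin 4).castSucc) = (2:Fin 5) from by decide,
          show ((3:Fin 4).castSucc) = (3:Fin 5) from by decide]
    have h4 : psiMap ℓ α β i (i+1) (i+1+1) x 4 =
        eval x (α (i+1)) * eval x (β (i+1+1)) - eval x (α (i+1+1)) * eval x (β (i+1)) := by
      simp [psiMap]
    have hEl : ∀ s, eval (fun t => eval x (ℓ i) * x t) (ℓ s) = eval x (ℓ i) * eval x (ℓ s) :=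
      fun s => eval_mul_smul (hl s) _ x
    have hEa : ∀ s, eval (fun t => eval x (ℓ i) * x t) (α s) = eval x (ℓ i) * eval x (α s) :=
      fun s => eval_mul_smul (ha s) _ x
    have hEb : ∀ s, eval (fun t => eval x (ℓ i) * x t) (β s) = eval x (ℓ i) * eval x (β s) :=
      fun s => eval_mul_smul (hb s) _ x
    have H0 : signedPf (modelMatrix ℓ α β (psiMap ℓ α β i (i+1) (i+1+1) x)) 0 = 0 := by
      rw [spf0_eq, hw, hEl, hEl, hEl, hEb, hEb, hEb]
      linear_combination (eval x (ℓ i) * eval x (ℓ i)) * hB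
    have H1 : signedPf (modelMatrix ℓ α β (psiMap ℓ α β i (i+1) (i+1+1) x)) 1 = 0 := by
      rw [spf1_eq, hw, hEl, hEl, hEl, hEa, hEa, hEa]
      linear_combination (-(eval x (ℓ i) * eval x (ℓ i))) * hA
    have H2 : signedPf (modelMatrix ℓ α β (psiMap ℓ α β i (i+1) (i+1+1) x)) 2 = 0 := by
      rw [spf2_eq, hw, h4, hEl, hEa, hEa, hEb, hEb]
      rcases show i = 0 ∨ i = 1 ∨ i = 2 by omega with rfl | rfl | rfl <;>
        simp only [Fin.reduceAdd] <;>
      [ (linear_combination (0 : K) * hA);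
        (linear_combination (eval x (ℓ 1) * eval x (α 2)) * hB
          - (eval x (ℓ 1) * eval x (β 2)) * hA);
        (linear_combination (eval x (ℓ 2) * eval x (β 1)) * hA
          - (eval x (ℓ 2) * eval x (α 1)) * hB) ]
    have H3 : signedPf (modelMatrix ℓ α β (psiMap ℓ α β i (i+1) (i+1+1) x)) 3 = 0 := by
      rw [spf3_eq, hw, h4, hEl, hEa, hEa, hEb, hEb]
      rcases show i = 0 ∨ i = 1 ∨ i = 2 by omega with rfl | rfl | rfl <;>
        simp only [Fin.reduceAdd] <;>
      [ (linear_combination (eval x (ℓ 0) * eval x (β 2)) * hA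
          - (eval x (ℓ 0) * eval x (α 2)) * hB);
        (linear_combination (0 : K) * hA);
        (linear_combination (eval x (ℓ 2) * eval x (α 0)) * hB
          - (eval x (ℓ 2) * eval x (β 0)) * hA) ]
    have H4 : signedPf (modelMatrix ℓ α β (psiMap ℓ α β i (i+1) (i+1+1) x)) 4 = 0 := by
      rw [spf4_eq, hw, h4, hEl, hEa, hEa, hEb, hEb]
      rcases show i = 0 ∨ i = 1 ∨ i = 2 by omega with rfl | rfl | rfl <;>
        simp only [Fin.reduceAdd] <;>
      [ (linear_combination (eval x (ℓ 0) * eval x (α 1)) * hB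
          - (eval x (ℓ 0) * eval x (β 1)) * hA);
        (linear_combination (eval x (ℓ 1) * eval x (β 0)) * hA
          - (eval x (ℓ 1) * eval x (α 0)) * hB);
        (linear_combination (0 : K) * hA) ]
    intro n
    fin_cases n
    · exact H0
    · exact H1
    · exact H2
    · exact H3
    · exact H4
  · -- projection maps C₅ into C₄
    intro y hy
    have h0 := hy 0
    have h1 := hy 1
    rw [spf0_eq] at h0
    rw [spf1_eq] at h1
    constructor
    · rw [Fin.sum_univ_three]; linear_combination -h1
    · rw [Fin.sum_univ_three]; linear_combination h0
  · -- proj ∘ ψ = ℓᵢ • id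
    intro x
    funext t
    fin_cases t <;>
      simp [psiMap, mul_comm,
        show ((0:Fin 4).castSucc) = (0:Fin 5) from by decide,
        show ((1:Fin 4).castSucc) = (1:Fin 5) from by decide,
        show ((2:Fin 4).castSucc) = (2:Fin 5) from by decide,
        show ((3:Fin 4).castSucc) = (3:Fin 5) from by decide]
  · -- ψ ∘ proj = c • id on C₅
    intro y hy _hy0 hL
    refine ⟨eval (fun t : Fin 4 => y t.castSucc) (ℓ i), hL, ?_⟩
    have E4 : psiMap ℓ α β i (i+1) (i+1+1) (fun t => y t.castSucc) 4 =
        eval (fun t : Fin 4 => y t.castSucc) (ℓ i) * y 4 := by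
      have h4 : psiMap ℓ α β i (i+1) (i+1+1) (fun t => y t.castSucc) 4 =
          eval (fun t : Fin 4 => y t.castSucc) (α (i+1)) *
            eval (fun t : Fin 4 => y t.castSucc) (β (i+1+1))
          - eval (fun t : Fin 4 => y t.castSucc) (α (i+1+1)) *
            eval (fun t : Fin 4 => y t.castSucc) (β (i+1)) := by
        simp [psiMap]
      rw [h4]
      rcases show i = 0 ∨ i = 1 ∨ i = 2 by omega with rfl | rfl | rfl <;>
          simp only [Fin.reduceAdd]
      · have h := hy 2; rw [spf2_eq] at h; linear_combination -h
      · have h := hy 3; rw [spf3_eq] at h; linear_combination -h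
      · have h := hy 4; rw [spf4_eq] at h; linear_combination -h
    funext t
    fin_cases t <;>
      [ skip; skip; skip; skip; exact E4 ] <;>
      simp [psiMap, mul_comm,
        show ((0:Fin 4).castSucc) = (0:Fin 5) from by decide,
        show ((1:Fin 4).castSucc) = (1:Fin 5) from by decide,
        show ((2:Fin 4).castSucc) = (2:Fin 5) from by decide,
        show ((3:Fin 4).castSucc) = (3:Fin 5) from by decide]
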